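/- Let H be a real Hilbert space and E : H → ℝ a nonnegative C¹ function whose gradient is L-Lipschitz: ‖∇E(x) − ∇E(y)‖ ≤ L‖x − y‖ for all x, y ∈ H. Let {x_k} ⊂ H be generated by x_{k+1} = x_k − τ_k d_k where each d_k is a descent direction (⟨∇E(x_k), d_k⟩ > 0) and each step size τ_k satisfies the Wolfe conditions E(x_k − τ_k d_k) ≤ E(x_k) − α τ_k ⟨∇E(x_k), d_k⟩ and ⟨∇E(x_k − τ_k d_k), −d_k⟩ ≥ −β⟨∇E(x_k), d_k⟩ with 0 < α < β < 1. Then the Zoutendijk condition holds: Σ_k cos²θ_k ‖∇E(x_k)‖² < ∞, where cos θ_k = ⟨∇E(x_k), d_k⟩ / (‖∇E(x_k)‖ ‖d_k‖). -/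

import Mathlib

open RealInnerProductSpace

/-- The Zoutendijk theorem in a (possibly infinite-dimensional) real Hilbert space: for a
nonnegative `C¹` energy with `L`-Lipschitz gradient and iterates `x_{k+1} = x_k − τ_k d_k`
along descent directions `d_k` with Wolfe step sizes `τ_k`, the series
`Σ cos²θ_k ‖∇E(x_k)‖²` converges, where `cos θ_k = ⟨∇E(x_k), d_k⟩/(‖∇E(x_k)‖‖d_k‖)`. -/
theorem zoutendijk
    {H : Type*} [NormedAddCommGroup H] [InnerProductSpace ℝ H] [CompleteSpace H]
    (E : H → ℝ) (gradE : H → H)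
    (hE : ∀ x, HasGradientAt E (gradE x) x)
    (hEnonneg : ∀ x, 0 ≤ E x)
    (L : ℝ) (hL : 0 < L)
    (hlip : ∀ x y : H, ‖gradE x - gradE y‖ ≤ L * ‖x - y‖)
    (x d : ℕ → H) (τ : ℕ → ℝ)
    (hiter : ∀ k, x (k + 1) = x k - τ k • d k)
    (hτ : ∀ k, 0 < τ k)
    (hdescent : ∀ k, 0 < ⟪gradE (x k), d k⟫)
    (α β : ℝ) (hα : 0 < α) (hαβ : α < β) (hβ : β < 1)
    (hwolfe1 : ∀ k, E (x k - τ k • d k) ≤ E (x k) - α * τ k * ⟪gradE (x k), d k⟫)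
    (hwolfe2 : ∀ k, ⟪gradE (x k - τ k • d k), -d k⟫ ≥ -β * ⟪gradE (x k), d k⟫) :
    Summable (fun k =>
      (⟪gradE (x k), d k⟫ / (‖gradE (x k)‖ * ‖d k‖)) ^ 2 * ‖gradE (x k)‖ ^ 2) := by
  set c : ℝ := α * (1 - β) / L with hc
  have hcpos : 0 < c := div_pos (mul_pos hα (by linarith)) hL
  have key : ∀ k, c * ((⟪gradE (x k), d k⟫ / (‖gradE (x k)‖ * ‖d k‖)) ^ 2 * ‖gradE (x k)‖ ^ 2)
      ≤ E (x k) - E (x (k + 1)) := by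
    intro k
    have hpp : 0 < ⟪gradE (x k), d k⟫ := hdescent k
    have hdne : d k ≠ 0 := by
      intro h; rw [h, inner_zero_right] at hpp; exact lt_irrefl 0 hpp
    have hgne : gradE (x k) ≠ 0 := by
      intro h; rw [h, inner_zero_left] at hpp; exact lt_irrefl 0 hpp
    have hdn : 0 < ‖d k‖ := norm_pos_iff.2 hdne
    have hgn : 0 < ‖gradE (x k)‖ := norm_pos_iff.2 hgne
    have hsimp : (⟪gradE (x k), d k⟫ / (‖gradE (x k)‖ * ‖d k‖)) ^ 2 * ‖gradE (x k)‖ ^ 2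
        = ⟪gradE (x k), d k⟫ ^ 2 / ‖d k‖ ^ 2 := by
      field_simp
    rw [hsimp]
    have h2 : ⟪gradE (x (k + 1)), d k⟫ ≤ β * ⟪gradE (x k), d k⟫ := by
      have hw := hwolfe2 k
      rw [inner_neg_right] at hw
      rw [hiter k]; linarith
    have hsub : (1 - β) * ⟪gradE (x k), d k⟫ ≤ ⟪gradE (x k) - gradE (x (k + 1)), d k⟫ := by
      rw [inner_sub_left]; linarith
    have hCS : ⟪gradE (x k) - gradE (x (k + 1)), d k⟫ ≤ L * τ k * ‖d k‖ ^ 2 := by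
      calc ⟪gradE (x k) - gradE (x (k + 1)), d k⟫
          ≤ ‖gradE (x k) - gradE (x (k + 1))‖ * ‖d k‖ := real_inner_le_norm _ _
        _ ≤ (L * ‖x k - x (k + 1)‖) * ‖d k‖ :=
            mul_le_mul_of_nonneg_right (hlip _ _) (norm_nonneg _)
        _ = L * τ k * ‖d k‖ ^ 2 := by
            rw [hiter k]
            simp only [sub_sub_cancel, norm_smul, Real.norm_eq_abs,
              abs_of_pos (hτ k)]
            ring
    have hτlb : (1 - β) * ⟪gradE (x k), d k⟫ ≤ L * τ k * ‖d k‖ ^ 2 := le_trans hsub hCS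
    have hw1 : E (x (k + 1)) ≤ E (x k) - α * τ k * ⟪gradE (x k), d k⟫ := by
      rw [hiter k]; exact hwolfe1 k
    have hfinal : c * (⟪gradE (x k), d k⟫ ^ 2 / ‖d k‖ ^ 2) ≤ α * τ k * ⟪gradE (x k), d k⟫ := by
      rw [hc, div_mul_div_comm, div_le_iff₀ (by positivity)]
      nlinarith [mul_le_mul_of_nonneg_left hτlb (le_of_lt (mul_pos hα hpp))]
    linarith
  have hnonneg : ∀ k, (0:ℝ) ≤
      (⟪gradE (x k), d k⟫ / (‖gradE (x k)‖ * ‖d k‖)) ^ 2 * ‖gradE (x k)‖ ^ 2 := by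
    intro k; positivity
  apply summable_of_sum_range_le hnonneg (c := E (x 0) / c)
  intro n
  rw [le_div_iff₀' hcpos]
  calc c * ∑ i ∈ Finset.range n,
        (⟪gradE (x i), d i⟫ / (‖gradE (x i)‖ * ‖d i‖)) ^ 2 * ‖gradE (x i)‖ ^ 2
      = ∑ i ∈ Finset.range n,
        c * ((⟪gradE (x i), d i⟫ / (‖gradE (x i)‖ * ‖d i‖)) ^ 2 * ‖gradE (x i)‖ ^ 2) := by
        rw [Finset.mul_sum]
    _ ≤ ∑ i ∈ Finset.range n, (E (x i) - E (x (i + 1))) :=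
        Finset.sum_le_sum fun i _ => key i
    _ = E (x 0) - E (x n) := Finset.sum_range_sub' (fun i => E (x i)) n
    _ ≤ E (x 0) := by linarith [hEnonneg (x n)]
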